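/- Let α ∈ (1/2,1), T > 0, n ≥ 1, t_k = kT/n, and let i(t) be the index with t_{i(t)} ≤ t < t_{i(t)+1}. Then there exists C (depending only on α) such that for all t ∈ [0,T] and 1 ≤ k ≤ n, ∑_{i=1}^{min(k, i(t))} ((t_k − t_{i−1})^α − (t_k − t_i)^α)((t − t_{i−1})^{2α−1} − (t − t_i)^{2α−1}) ≤ C (T/n)^{3α−1} ∑_{i=1}^{n} i^{3α−3}, where the left sum is taken over indices i with t_i ≤ t. -/

import Mathlib

open Real

private lemma key_rpow {β x : ℝ} (hβ0 : 0 < β) (hβ1 : β ≤ 1) (hx : 1 ≤ x) :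
    x ^ β - (x - 1) ^ β ≤ x ^ (β - 1) := by
  rcases eq_or_lt_of_le hx with h | h
  · rw [← h]
    simp [Real.zero_rpow hβ0.ne']
  · have hx0 : (0:ℝ) < x := lt_trans one_pos h
    have h1 : (0:ℝ) < x - 1 := by linarith
    have hmono : x ^ (β - 1) ≤ (x - 1) ^ (β - 1) :=
      Real.rpow_le_rpow_of_nonpos h1 (by linarith) (by linarith)
    have e1 : x ^ (β - 1) * x = x ^ β := by
      rw [← Real.rpow_add_one hx0.ne' (β - 1)]; ring_nf
    have e2 : (x - 1) ^ (β - 1) * (x - 1) = (x - 1) ^ β := by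
      rw [← Real.rpow_add_one h1.ne' (β - 1)]; ring_nf
    have : x ^ (β - 1) * (x - 1) ≤ (x - 1) ^ β := by
      rw [← e2]
      exact mul_le_mul_of_nonneg_right hmono h1.le
    nlinarith [this, e1]

private lemma key_rpow2 {β y : ℝ} (hβ0 : 0 < β) (hβ1 : β ≤ 1) (hy : 0 ≤ y) :
    (y + 2) ^ β - y ^ β ≤ 2 * (y + 1) ^ (β - 1) := by
  have h1 := key_rpow hβ0 hβ1 (x := y + 1) (by linarith)
  have h2 := key_rpow hβ0 hβ1 (x := y + 2) (by linarith)
  have e1 : y + 1 - 1 = y := by ring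
  have e2 : y + 2 - 1 = y + 1 := by ring
  rw [e1] at h1
  rw [e2] at h2
  have h3 : (y + 2) ^ (β - 1) ≤ (y + 1) ^ (β - 1) :=
    Real.rpow_le_rpow_of_nonpos (by linarith) (by linarith) (by linarith)
  linarith

theorem stmt_16 (α : ℝ) (hα : α ∈ Set.Ioo (1 / 2 : ℝ) 1) :
    ∃ C : ℝ, ∀ T : ℝ, 0 < T → ∀ n : ℕ, 1 ≤ n → ∀ t ∈ Set.Icc (0 : ℝ) T,
      ∀ k : ℕ, 1 ≤ k → k ≤ n →
      ∑ i ∈ Finset.Icc 1 (min k ⌊t * n / T⌋₊),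
        (((k : ℝ) * T / n - ((i : ℝ) - 1) * T / n) ^ α
            - ((k : ℝ) * T / n - (i : ℝ) * T / n) ^ α)
          * ((t - ((i : ℝ) - 1) * T / n) ^ (2 * α - 1) - (t - (i : ℝ) * T / n) ^ (2 * α - 1))
        ≤ C * (T / n) ^ (3 * α - 1) * ∑ i ∈ Finset.Icc 1 n, (i : ℝ) ^ (3 * α - 3) := by
  obtain ⟨hα1, hα2⟩ := hα
  refine ⟨2, fun T hT n hn t ht k hk1 hk2 => ?_⟩
  obtain ⟨ht0, htT⟩ := ht
  have hn0 : (0:ℝ) < n := by exact_mod_cast hn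
  set h := T / n with hhdef
  have hh : 0 < h := by positivity
  set j := ⌊t * n / T⌋₊ with hjdef
  set m := min k j with hmdef
  -- floor facts
  have hj1 : (j : ℝ) * T / n ≤ t := by
    have h0 : (j : ℝ) ≤ t * n / T := Nat.floor_le (by positivity)
    rw [div_le_iff₀ hn0]
    calc (j:ℝ) * T ≤ (t * n / T) * T := by nlinarith
    _ = t * n := by field_simp
  have hj2 : t < ((j : ℝ) + 1) * T / n := by
    have h0 : t * n / T < (j : ℝ) + 1 := Nat.lt_floor_add_one _
    rw [lt_div_iff₀ hn0]
    calc t * n = (t * n / T) * T := by field_simp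
    _ < ((j:ℝ) + 1) * T := by nlinarith
  have hβ0 : 0 < 2 * α - 1 := by linarith
  have hβ1 : 2 * α - 1 ≤ 1 := by linarith
  have hα0 : 0 < α := by linarith
  -- termwise bound
  have step : ∀ i ∈ Finset.Icc 1 m,
      (((k : ℝ) * T / n - ((i : ℝ) - 1) * T / n) ^ α
            - ((k : ℝ) * T / n - (i : ℝ) * T / n) ^ α)
          * ((t - ((i : ℝ) - 1) * T / n) ^ (2 * α - 1) - (t - (i : ℝ) * T / n) ^ (2 * α - 1))
        ≤ 2 * h ^ (3 * α - 1) * ((m : ℝ) + 1 - i) ^ (3 * α - 3) := by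
    intro i hi
    rw [Finset.mem_Icc] at hi
    obtain ⟨hi1, hi2⟩ := hi
    have hik : i ≤ k := le_trans hi2 (min_le_left _ _)
    have hij : i ≤ j := le_trans hi2 (min_le_right _ _)
    have hikR : (i:ℝ) ≤ k := Nat.cast_le.mpr hik
    have hijR : (i:ℝ) ≤ j := Nat.cast_le.mpr hij
    have himR : (i:ℝ) ≤ m := Nat.cast_le.mpr hi2
    have hmkR : (m:ℝ) ≤ k := Nat.cast_le.mpr (min_le_left _ _)
    have hmjR : (m:ℝ) ≤ j := Nat.cast_le.mpr (min_le_right _ _)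
    set x : ℝ := (k:ℝ) - i + 1 with hxdef
    set y : ℝ := (j:ℝ) - i with hydef
    have hx : 1 ≤ x := by rw [hxdef]; linarith
    have hy : 0 ≤ y := by rw [hydef]; linarith
    -- rewrite the bases
    have e1 : (k : ℝ) * T / n - ((i : ℝ) - 1) * T / n = x * h := by
      rw [hxdef, hhdef]; ring
    have e2 : (k : ℝ) * T / n - (i : ℝ) * T / n = (x - 1) * h := by
      rw [hxdef, hhdef]; ring
    -- first factor
    have F1 : (x * h) ^ α - ((x - 1) * h) ^ α ≤ x ^ (α - 1) * h ^ α := by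
      rw [Real.mul_rpow (by linarith) hh.le, Real.mul_rpow (by linarith) hh.le]
      have hk := key_rpow hα0 hα2.le hx
      have hnn : (0:ℝ) ≤ h ^ α := Real.rpow_nonneg hh.le _
      calc x ^ α * h ^ α - (x - 1) ^ α * h ^ α
          = (x ^ α - (x - 1) ^ α) * h ^ α := by ring
        _ ≤ x ^ (α - 1) * h ^ α := mul_le_mul_of_nonneg_right hk hnn
    have F1rhs_nonneg : 0 ≤ x ^ (α - 1) * h ^ α := by positivity
    -- second factor bounds
    have d1 : y * h ≤ t - (i:ℝ) * T / n := by
      have : y * h = (j:ℝ) * T / n - (i:ℝ) * T / n := by rw [hydef, hhdef]; ring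
      linarith
    have d2 : t - ((i:ℝ) - 1) * T / n ≤ (y + 2) * h := by
      have : (y + 2) * h = ((j:ℝ) + 1) * T / n - ((i:ℝ) - 1) * T / n := by
        rw [hydef, hhdef]; ring
      linarith
    have d0 : 0 ≤ y * h := mul_nonneg hy hh.le
    have dt : 0 ≤ t - (i:ℝ) * T / n := le_trans d0 d1
    have dstep : (i:ℝ) * T / n - ((i:ℝ) - 1) * T / n = h := by rw [hhdef]; ring
    have dt' : t - (i:ℝ) * T / n ≤ t - ((i:ℝ) - 1) * T / n + 0 := by linarith
    have dt'' : t - (i:ℝ) * T / n ≤ t - ((i:ℝ) - 1) * T / n := by linarith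
    have F2nonneg : 0 ≤ (t - ((i:ℝ) - 1) * T / n) ^ (2 * α - 1)
        - (t - (i:ℝ) * T / n) ^ (2 * α - 1) := by
      have := Real.rpow_le_rpow dt dt'' (by linarith : (0:ℝ) ≤ 2 * α - 1)
      linarith
    have F2 : (t - ((i:ℝ) - 1) * T / n) ^ (2 * α - 1) - (t - (i:ℝ) * T / n) ^ (2 * α - 1)
        ≤ 2 * (y + 1) ^ (2 * α - 1 - 1) * h ^ (2 * α - 1) := by
      have u1 : (t - ((i:ℝ) - 1) * T / n) ^ (2 * α - 1) ≤ ((y + 2) * h) ^ (2 * α - 1) :=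
        Real.rpow_le_rpow (by linarith) d2 (by linarith)
      have u2 : (y * h) ^ (2 * α - 1) ≤ (t - (i:ℝ) * T / n) ^ (2 * α - 1) :=
        Real.rpow_le_rpow d0 d1 (by linarith)
      have u3 : ((y + 2) * h) ^ (2 * α - 1) - (y * h) ^ (2 * α - 1)
          ≤ 2 * (y + 1) ^ (2 * α - 1 - 1) * h ^ (2 * α - 1) := by
        rw [Real.mul_rpow (by linarith) hh.le, Real.mul_rpow hy hh.le]
        have hk := key_rpow2 hβ0 hβ1 hy
        have hnn : (0:ℝ) ≤ h ^ (2 * α - 1) := Real.rpow_nonneg hh.le _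
        calc (y + 2) ^ (2 * α - 1) * h ^ (2 * α - 1) - y ^ (2 * α - 1) * h ^ (2 * α - 1)
            = ((y + 2) ^ (2 * α - 1) - y ^ (2 * α - 1)) * h ^ (2 * α - 1) := by ring
          _ ≤ 2 * (y + 1) ^ (2 * α - 1 - 1) * h ^ (2 * α - 1) := by
              have := mul_le_mul_of_nonneg_right hk hnn
              linarith
      linarith
    -- combine
    rw [e1, e2]
    calc ((x * h) ^ α - ((x - 1) * h) ^ α)
          * ((t - ((i:ℝ) - 1) * T / n) ^ (2 * α - 1) - (t - (i:ℝ) * T / n) ^ (2 * α - 1))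
        ≤ (x ^ (α - 1) * h ^ α) * (2 * (y + 1) ^ (2 * α - 1 - 1) * h ^ (2 * α - 1)) :=
          mul_le_mul F1 F2 F2nonneg F1rhs_nonneg
      _ = 2 * (h ^ α * h ^ (2 * α - 1)) * (x ^ (α - 1) * (y + 1) ^ (2 * α - 1 - 1)) := by
          ring
      _ ≤ 2 * (h ^ α * h ^ (2 * α - 1))
            * (((m:ℝ) + 1 - i) ^ (α - 1) * ((m:ℝ) + 1 - i) ^ (2 * α - 1 - 1)) := by
          have hmpos : (0:ℝ) < (m:ℝ) + 1 - i := by linarith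
          have b1 : x ^ (α - 1) ≤ ((m:ℝ) + 1 - i) ^ (α - 1) :=
            Real.rpow_le_rpow_of_nonpos hmpos (by rw [hxdef]; linarith) (by linarith)
          have b2 : (y + 1) ^ (2 * α - 1 - 1) ≤ ((m:ℝ) + 1 - i) ^ (2 * α - 1 - 1) :=
            Real.rpow_le_rpow_of_nonpos hmpos (by rw [hydef]; linarith) (by linarith)
          have hmm := mul_le_mul b1 b2 (Real.rpow_nonneg (by linarith) _)
            (Real.rpow_nonneg hmpos.le _)
          have h2nn : (0:ℝ) ≤ 2 * (h ^ α * h ^ (2 * α - 1)) := by positivity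
          exact mul_le_mul_of_nonneg_left hmm h2nn
      _ = 2 * h ^ (3 * α - 1) * ((m : ℝ) + 1 - i) ^ (3 * α - 3) := by
          have hmpos : (0:ℝ) < (m:ℝ) + 1 - i := by linarith
          rw [← Real.rpow_add hh, ← Real.rpow_add hmpos,
            show α + (2 * α - 1) = 3 * α - 1 by ring,
            show α - 1 + (2 * α - 1 - 1) = 3 * α - 3 by ring]
  -- sum it up
  calc ∑ i ∈ Finset.Icc 1 m,
        (((k : ℝ) * T / n - ((i : ℝ) - 1) * T / n) ^ α
            - ((k : ℝ) * T / n - (i : ℝ) * T / n) ^ α)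
          * ((t - ((i : ℝ) - 1) * T / n) ^ (2 * α - 1) - (t - (i : ℝ) * T / n) ^ (2 * α - 1))
      ≤ ∑ i ∈ Finset.Icc 1 m, 2 * h ^ (3 * α - 1) * ((m : ℝ) + 1 - i) ^ (3 * α - 3) :=
        Finset.sum_le_sum step
    _ = 2 * h ^ (3 * α - 1) * ∑ i ∈ Finset.Icc 1 m, ((m : ℝ) + 1 - i) ^ (3 * α - 3) := by
        rw [Finset.mul_sum]
    _ = 2 * h ^ (3 * α - 1) * ∑ i ∈ Finset.Icc 1 m, (i : ℝ) ^ (3 * α - 3) := by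
        congr 1
        refine Finset.sum_nbij' (fun i => m + 1 - i) (fun i => m + 1 - i) ?_ ?_ ?_ ?_ ?_
        · intro a ha; rw [Finset.mem_Icc] at *; omega
        · intro a ha; rw [Finset.mem_Icc] at *; omega
        · intro a ha; rw [Finset.mem_Icc] at ha; omega
        · intro a ha; rw [Finset.mem_Icc] at ha; omega
        · intro a ha
          rw [Finset.mem_Icc] at ha
          congr 1
          rw [Nat.cast_sub (by omega), Nat.cast_add, Nat.cast_one]
    _ ≤ 2 * h ^ (3 * α - 1) * ∑ i ∈ Finset.Icc 1 n, (i : ℝ) ^ (3 * α - 3) := by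
        apply mul_le_mul_of_nonneg_left
        · apply Finset.sum_le_sum_of_subset_of_nonneg
          · apply Finset.Icc_subset_Icc_right
            exact le_trans (min_le_left _ _) hk2
          · intro i _ _
            exact Real.rpow_nonneg (Nat.cast_nonneg i) _
        · positivity
    _ = 2 * (T / n) ^ (3 * α - 1) * ∑ i ∈ Finset.Icc 1 n, (i : ℝ) ^ (3 * α - 3) := by
        rw [hhdef]
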